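/- Let d ≥ 1, let F : ℝ^d → ℝ be ℓ-smooth, let λ > 0, let x ∈ ℝ^d, and let u be a random vector uniformly distributed on the Euclidean sphere √d·S^{d−1} = {x ∈ ℝ^d : ‖x‖ = √d}. Let H be a real symmetric positive semi-definite d×d matrix with operator norm ‖H‖₂ ≤ ℓ and trace tr(H) ≤ r·ℓ for some r > 0. Define G_λ(x) = ((F(x + λu) − F(x − λu)) / (2λ)) · u. Then E[ G_λ(x)ᵀ H G_λ(x) ] ≤ 2ℓ(r + 2) · ‖∇F(x)‖² + (ℓ³/2) · λ² · d² · r. -/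

import Mathlib

open MeasureTheory Real
open scoped RealInnerProductSpace ENNReal

noncomputable section

/-- The uniform (rotation-invariant) probability measure on the sphere of radius `√d`
centered at the origin in `ℝ^d`. -/
def IsUniformOnSphere (d : ℕ) (μ : Measure (EuclideanSpace ℝ (Fin d))) : Prop :=
  IsProbabilityMeasure μ ∧
  μ (Metric.sphere (0 : EuclideanSpace ℝ (Fin d)) (Real.sqrt d)) = 1 ∧
  ∀ T : EuclideanSpace ℝ (Fin d) ≃ₗᵢ[ℝ] EuclideanSpace ℝ (Fin d), Measure.map T μ = μ

/-- The quadratic form `vᵀ H v` of a `d × d` matrix `H`. -/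
def quadForm {d : ℕ} (H : Matrix (Fin d) (Fin d) ℝ) (v : EuclideanSpace ℝ (Fin d)) : ℝ :=
  ∑ i, ∑ j, v i * H i j * v j

section Taylor

open intervalIntegral

variable {E : Type*} [NormedAddCommGroup E] [InnerProductSpace ℝ E] [CompleteSpace E]

lemma lipschitz_gradient {F : E → ℝ} {ell : ℝ} (hell : 0 ≤ ell)
    (hsmooth : ∀ x y : E, ‖gradient F x - gradient F y‖ ≤ ell * ‖x - y‖) :
    LipschitzWith (Real.toNNReal ell) (gradient F) := by
  refine LipschitzWith.of_dist_le_mul fun x y => ?_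
  rw [dist_eq_norm, dist_eq_norm, Real.coe_toNNReal ell hell]
  exact hsmooth x y

lemma taylor_bound {F : E → ℝ} (hF : Differentiable ℝ F) {ell : ℝ} (hell : 0 ≤ ell)
    (hsmooth : ∀ x y : E, ‖gradient F x - gradient F y‖ ≤ ell * ‖x - y‖) (a b : E) :
    |F b - F a - ⟪gradient F a, b - a⟫| ≤ ell / 2 * ‖b - a‖ ^ 2 := by
  set w : E := b - a with hw
  set φ : ℝ → ℝ := fun t => ⟪gradient F (a + t • w), w⟫ with hφ
  have hgradcont : Continuous (gradient F) := (lipschitz_gradient hell hsmooth).continuous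
  have hφcont : Continuous φ := by
    apply Continuous.inner
    · exact hgradcont.comp (continuous_const.add (continuous_id.smul continuous_const))
    · exact continuous_const
  have hderiv : ∀ t ∈ Set.uIcc (0:ℝ) 1, HasDerivAt (fun t => F (a + t • w)) (φ t) t := by
    intro t _
    have hγ : HasDerivAt (fun t : ℝ => a + t • w) w t := by
      simpa using ((hasDerivAt_id t).smul_const w).const_add a
    have hgrad : HasGradientAt F (gradient F (a + t • w)) (a + t • w) :=
      (hF _).hasGradientAt
    have hfd := hasGradientAt_iff_hasFDerivAt.1 hgrad
    have := hfd.comp_hasDerivAt t hγ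
    simp [hφ] at this ⊢; exact this
  have hint : IntervalIntegrable φ volume 0 1 := hφcont.intervalIntegrable 0 1
  have hFTC : ∫ t in (0:ℝ)..1, φ t = F (a + (1:ℝ) • w) - F (a + (0:ℝ) • w) := by
    have := intervalIntegral.integral_eq_sub_of_hasDerivAt hderiv hint
    simpa using this
  have hFb : F (a + (1:ℝ) • w) = F b := by rw [one_smul, hw]; congr 1; abel
  have hFa : F (a + (0:ℝ) • w) = F a := by rw [zero_smul, add_zero]
  rw [hFb, hFa] at hFTC
  have hφ0 : φ 0 = ⟪gradient F a, w⟫ := by simp [hφ]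
  have hsub : F b - F a - ⟪gradient F a, w⟫ = ∫ t in (0:ℝ)..1, (φ t - φ 0) := by
    rw [intervalIntegral.integral_sub hint (intervalIntegrable_const), hFTC,
      intervalIntegral.integral_const, hφ0]
    simp
  rw [hsub]
  have hptw : ∀ t ∈ Set.Icc (0:ℝ) 1, |φ t - φ 0| ≤ ell * ‖w‖ ^ 2 * t := by
    intro t ht
    have h1 : φ t - φ 0 = ⟪gradient F (a + t • w) - gradient F (a + (0:ℝ) • w), w⟫ := by
      rw [inner_sub_left]
    rw [h1]
    calc |⟪gradient F (a + t • w) - gradient F (a + (0:ℝ) • w), w⟫|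
        ≤ ‖gradient F (a + t • w) - gradient F (a + (0:ℝ) • w)‖ * ‖w‖ :=
          abs_real_inner_le_norm _ _
      _ ≤ (ell * ‖(a + t • w) - (a + (0:ℝ) • w)‖) * ‖w‖ := by
          exact mul_le_mul_of_nonneg_right (hsmooth _ _) (norm_nonneg _)
      _ = ell * ‖w‖ ^ 2 * t := by
          rw [zero_smul, add_zero, add_sub_cancel_left, norm_smul, Real.norm_eq_abs,
            abs_of_nonneg ht.1]
          ring
  have hmono : ∫ t in (0:ℝ)..1, |φ t - φ 0| ≤ ∫ t in (0:ℝ)..1, ell * ‖w‖ ^ 2 * t := by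
    refine intervalIntegral.integral_mono_on (by norm_num)
      ((hφcont.sub continuous_const).abs.intervalIntegrable 0 1)
      ((continuous_const.mul continuous_id).intervalIntegrable 0 1) hptw
  have habs : |∫ t in (0:ℝ)..1, (φ t - φ 0)| ≤ ∫ t in (0:ℝ)..1, |φ t - φ 0| := by
    exact intervalIntegral.abs_integral_le_integral_abs (by norm_num)
  have hval : ∫ t in (0:ℝ)..1, ell * ‖w‖ ^ 2 * t = ell / 2 * ‖w‖ ^ 2 := by
    rw [intervalIntegral.integral_const_mul, integral_id]
    ring
  calc |∫ t in (0:ℝ)..1, (φ t - φ 0)| ≤ ∫ t in (0:ℝ)..1, |φ t - φ 0| := habs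
    _ ≤ ∫ t in (0:ℝ)..1, ell * ‖w‖ ^ 2 * t := hmono
    _ = ell / 2 * ‖w‖ ^ 2 := hval

end Taylor

namespace ZO

variable {d : ℕ} {μ : Measure (EuclideanSpace ℝ (Fin d))}

local notation "E" => EuclideanSpace ℝ (Fin d)

lemma ae_sphere (hμ : IsUniformOnSphere d μ) :
    ∀ᵐ u ∂μ, ‖u‖ = Real.sqrt d := by
  have h1 : μ (Metric.sphere (0 : E) (Real.sqrt d))ᶜ = 0 := by
    haveI := hμ.1
    rw [MeasureTheory.prob_compl_eq_zero_iff Metric.isClosed_sphere.measurableSet]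
    exact hμ.2.1
  refine MeasureTheory.measure_mono_null ?_ h1
  intro u hu
  simp only [Set.mem_compl_iff, Metric.mem_sphere, dist_zero_right] at *
  exact hu

lemma integrable_cont (hμ : IsUniformOnSphere d μ) {f : E → ℝ} (hf : Continuous f) :
    Integrable f μ := by
  haveI := hμ.1
  obtain ⟨C, hC⟩ := (isCompact_sphere (0 : E) (Real.sqrt d)).exists_bound_of_continuousOn
    hf.continuousOn
  refine (integrable_const C).mono' hf.aestronglyMeasurable ?_
  filter_upwards [ae_sphere hμ] with u hu
  exact hC u (by simp [hu])

lemma integral_comp (hμ : IsUniformOnSphere d μ) (T : E ≃ₗᵢ[ℝ] E) {f : E → ℝ}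
    (hf : Continuous f) : ∫ u, f (T u) ∂μ = ∫ u, f u ∂μ := by
  conv_rhs => rw [← hμ.2.2 T]
  rw [integral_map T.continuous.measurable.aemeasurable hf.aestronglyMeasurable]

lemma exists_isometry (b b' : OrthonormalBasis (Fin d) ℝ E) :
    ∃ T : E ≃ₗᵢ[ℝ] E, ∀ i, T (b i) = b' i := by
  refine ⟨(b.repr : E ≃ₗᵢ[ℝ] EuclideanSpace ℝ (Fin d)).trans b'.repr.symm, fun i => ?_⟩
  simp [OrthonormalBasis.repr_self]

lemma exists_basis_single (hd : 1 ≤ d) {v : E} (hv : ‖v‖ = 1) :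
    ∃ b : OrthonormalBasis (Fin d) ℝ E, b ⟨0, hd⟩ = v := by
  have hcard : Module.finrank ℝ E = Fintype.card (Fin d) := by
    simp [finrank_euclideanSpace]
  have horth : Orthonormal ℝ (Set.restrict {(⟨0, hd⟩ : Fin d)} (fun _ => v)) := by
    constructor
    · rintro ⟨i, hi⟩; simpa [Set.restrict] using hv
    · rintro ⟨i, hi⟩ ⟨j, hj⟩ hij
      exact absurd (Subtype.ext (hi.trans hj.symm)) hij
  obtain ⟨b, hb⟩ := horth.exists_orthonormalBasis_extension_of_card_eq hcard
  exact ⟨b, hb _ rfl⟩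

lemma exists_basis_pair (hd : 2 ≤ d) {v w : E} (hv : ‖v‖ = 1) (hw : ‖w‖ = 1)
    (hvw : ⟪v, w⟫ = 0) :
    ∃ b : OrthonormalBasis (Fin d) ℝ E, b ⟨0, by omega⟩ = v ∧ b ⟨1, hd⟩ = w := by
  have hcard : Module.finrank ℝ E = Fintype.card (Fin d) := by
    simp [finrank_euclideanSpace]
  set i0 : Fin d := ⟨0, by omega⟩
  set i1 : Fin d := ⟨1, hd⟩
  have hne : i0 ≠ i1 := by simp [i0, i1, Fin.ext_iff]
  set f : Fin d → E := fun i => if i = i0 then v else w with hf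
  have horth : Orthonormal ℝ (Set.restrict {i0, i1} f) := by
    constructor
    · rintro ⟨i, hi⟩
      have : i = i0 ∨ i = i1 := by simpa using hi
      rcases this with rfl | rfl <;> simp [Set.restrict, f, hv, hw, hne, hne.symm]
    · rintro ⟨i, hi⟩ ⟨j, hj⟩ hij
      have hij' : i ≠ j := fun h => hij (Subtype.ext h)
      have hi' : i = i0 ∨ i = i1 := by simpa using hi
      have hj' : j = i0 ∨ j = i1 := by simpa using hj
      rcases hi' with rfl | rfl <;> rcases hj' with rfl | rfl <;>
        first
        | exact absurd rfl hij'
        | simp [Set.restrict, f, hne, hne.symm, hvw, real_inner_comm v w]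
  obtain ⟨b, hb⟩ := horth.exists_orthonormalBasis_extension_of_card_eq hcard
  refine ⟨b, ?_, ?_⟩
  · rw [hb i0 (by simp)]; simp [f]
  · rw [hb i1 (by simp)]; simp [f, hne.symm]

lemma cont_inner (v : E) : Continuous fun u : E => ⟪v, u⟫ :=
  continuous_const.inner continuous_id

-- moments of pairs agree for all orthonormal pairs via isometries
lemma moment_pair_eq (hμ : IsUniformOnSphere d μ) (φ : ℝ → ℝ → ℝ) (hφ : Continuous fun p : ℝ × ℝ => φ p.1 p.2)
    (b b' : OrthonormalBasis (Fin d) ℝ E) (i j : Fin d) :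
    ∫ u, φ ⟪b i, u⟫ ⟪b j, u⟫ ∂μ = ∫ u, φ ⟪b' i, u⟫ ⟪b' j, u⟫ ∂μ := by
  obtain ⟨T, hT⟩ := exists_isometry b' b
  have hc : Continuous fun u : E => φ ⟪b i, u⟫ ⟪b j, u⟫ :=
    hφ.comp ((cont_inner _).prodMk (cont_inner _))
  calc ∫ u, φ ⟪b i, u⟫ ⟪b j, u⟫ ∂μ = ∫ u, φ ⟪b i, T u⟫ ⟪b j, T u⟫ ∂μ :=
        (integral_comp hμ T hc).symm
    _ = ∫ u, φ ⟪b' i, u⟫ ⟪b' j, u⟫ ∂μ := by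
        congr 1; funext u
        rw [← hT i, ← hT j, T.inner_map_map, T.inner_map_map]

lemma parseval (b : OrthonormalBasis (Fin d) ℝ E) (u : E) :
    ∑ i, ⟪b i, u⟫ ^ 2 = ‖u‖ ^ 2 := by
  have := b.sum_inner_mul_inner u u
  rw [real_inner_self_eq_norm_sq] at this
  rw [← this]
  refine Finset.sum_congr rfl fun i _ => ?_
  rw [real_inner_comm u (b i)]; ring

lemma moment2 (hd : 1 ≤ d) (hμ : IsUniformOnSphere d μ) {v : E} (hv : ‖v‖ = 1) :
    ∫ u, ⟪v, u⟫ ^ 2 ∂μ = 1 := by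
  haveI := hμ.1
  obtain ⟨b, hb⟩ := exists_basis_single hd hv
  set i0 : Fin d := ⟨0, hd⟩
  have heq : ∀ i : Fin d, ∫ u, ⟪b i, u⟫ ^ 2 ∂μ = ∫ u, ⟪b i0, u⟫ ^ 2 ∂μ := by
    intro i
    have := moment_pair_eq hμ (fun s _ => s ^ 2) (by fun_prop) b
      (b.reindex (Equiv.swap i i0)) i i
    simpa [OrthonormalBasis.reindex_apply, Equiv.swap_apply_left] using this
  have hsum : ∑ i : Fin d, ∫ u, ⟪b i, u⟫ ^ 2 ∂μ = (d : ℝ) := by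
    rw [← integral_finset_sum _ (fun i _ => integrable_cont (f := fun u => ⟪b i, u⟫ ^ 2) hμ ((cont_inner _).pow 2))]
    have : ∀ᵐ u ∂μ, ∑ i, ⟪b i, u⟫ ^ 2 = (d : ℝ) := by
      filter_upwards [ae_sphere hμ] with u hu
      rw [parseval, hu, sq_sqrt (Nat.cast_nonneg d)]
    rw [integral_congr_ae this, integral_const, probReal_univ]
    simp
  rw [Finset.sum_congr rfl (fun i _ => heq i), Finset.sum_const] at hsum
  simp only [Finset.card_univ, Fintype.card_fin, nsmul_eq_mul] at hsum
  have hd0 : (d : ℝ) ≠ 0 := Nat.cast_ne_zero.2 (by omega)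
  have : ∫ u, ⟪b i0, u⟫ ^ 2 ∂μ = 1 := by
    field_simp at hsum ⊢; linarith [hsum]
  rw [← hb]; exact this

lemma moment31 (hμ : IsUniformOnSphere d μ) {v w : E}
    (hvw : ⟪v, w⟫ = 0) :
    ∫ u, ⟪v, u⟫ ^ 3 * ⟪w, u⟫ ∂μ = 0 := by
  set K := (ℝ ∙ w)ᗮ
  set R : E ≃ₗᵢ[ℝ] E := K.reflection with hR
  have hsymm : ∀ a u : E, ⟪a, R u⟫ = ⟪R a, u⟫ := by
    intro a u
    conv_lhs => rw [← R.apply_symm_apply a]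
    rw [R.inner_map_map, hR, Submodule.reflection_symm]
  have hRw : R w = -w := Submodule.reflection_orthogonalComplement_singleton_eq_neg w
  have hRv : R v = v := by
    refine Submodule.reflection_mem_subspace_eq_self ?_
    rw [Submodule.mem_orthogonal]
    intro z hz
    obtain ⟨c, rfl⟩ := Submodule.mem_span_singleton.1 hz
    rw [real_inner_smul_left, real_inner_comm, hvw, mul_zero]
  have hc : Continuous fun u : E => ⟪v, u⟫ ^ 3 * ⟪w, u⟫ :=
    ((cont_inner v).pow 3).mul (cont_inner w)
  have h1 : ∫ u, ⟪v, u⟫ ^ 3 * ⟪w, u⟫ ∂μ = ∫ u, -(⟪v, u⟫ ^ 3 * ⟪w, u⟫) ∂μ := by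
    calc ∫ u, ⟪v, u⟫ ^ 3 * ⟪w, u⟫ ∂μ = ∫ u, ⟪v, R u⟫ ^ 3 * ⟪w, R u⟫ ∂μ :=
          (integral_comp hμ R hc).symm
      _ = ∫ u, -(⟪v, u⟫ ^ 3 * ⟪w, u⟫) ∂μ := by
          congr 1; funext u
          rw [hsymm, hsymm, hRv, hRw, inner_neg_left]
          ring
  rw [integral_neg] at h1
  linarith

lemma m22_eq (hd : 2 ≤ d) (hμ : IsUniformOnSphere d μ) {v w v' w' : E}
    (hv : ‖v‖ = 1) (hw : ‖w‖ = 1) (hvw : ⟪v, w⟫ = 0)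
    (hv' : ‖v'‖ = 1) (hw' : ‖w'‖ = 1) (hvw' : ⟪v', w'⟫ = 0) :
    ∫ u, ⟪v, u⟫ ^ 2 * ⟪w, u⟫ ^ 2 ∂μ = ∫ u, ⟪v', u⟫ ^ 2 * ⟪w', u⟫ ^ 2 ∂μ := by
  obtain ⟨b, hb0, hb1⟩ := exists_basis_pair hd hv hw hvw
  obtain ⟨b', hb0', hb1'⟩ := exists_basis_pair hd hv' hw' hvw'
  have := moment_pair_eq hμ (fun s t => s ^ 2 * t ^ 2)
    (by exact (continuous_fst.pow 2).mul (continuous_snd.pow 2)) b b'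
    ⟨0, by omega⟩ ⟨1, hd⟩
  rwa [hb0, hb1, hb0', hb1'] at this

lemma m4_eq (hd : 1 ≤ d) (hμ : IsUniformOnSphere d μ) {v v' : E}
    (hv : ‖v‖ = 1) (hv' : ‖v'‖ = 1) :
    ∫ u, ⟪v, u⟫ ^ 4 ∂μ = ∫ u, ⟪v', u⟫ ^ 4 ∂μ := by
  obtain ⟨b, hb0⟩ := exists_basis_single hd hv
  obtain ⟨b', hb0'⟩ := exists_basis_single hd hv'
  have := moment_pair_eq hμ (fun s _ => s ^ 4)
    (by exact continuous_fst.pow 4) b b' ⟨0, hd⟩ ⟨0, hd⟩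
  rwa [hb0, hb0'] at this

/-- For `d ≥ 2`: bounds `∫ X⁴ ≤ 3` and `∫ X²Y² ≤ 1` for orthonormal `v, w`. -/
lemma m4_m22_bounds (hd : 2 ≤ d) (hμ : IsUniformOnSphere d μ) {v w : E}
    (hv : ‖v‖ = 1) (hw : ‖w‖ = 1) (hvw : ⟪v, w⟫ = 0) :
    ∫ u, ⟪v, u⟫ ^ 4 ∂μ ≤ 3 ∧ ∫ u, ⟪v, u⟫ ^ 2 * ⟪w, u⟫ ^ 2 ∂μ ≤ 1 := by
  haveI := hμ.1
  set M4 := ∫ u, ⟪v, u⟫ ^ 4 ∂μ with hM4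
  set M22 := ∫ u, ⟪v, u⟫ ^ 2 * ⟪w, u⟫ ^ 2 ∂μ with hM22
  set s : ℝ := (Real.sqrt 2)⁻¹ with hs
  have h2 : (Real.sqrt 2) ^ 2 = 2 := Real.sq_sqrt (by norm_num)
  have hspos : 0 < Real.sqrt 2 := Real.sqrt_pos.2 (by norm_num)
  have hs2 : s ^ 2 = 1 / 2 := by rw [hs, inv_pow, h2]; norm_num
  have hnvw : ‖v + w‖ = Real.sqrt 2 := by
    have : ‖v + w‖ ^ 2 = 2 := by
      rw [norm_add_sq_real, hv, hw, hvw]; norm_num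
    rw [← Real.sqrt_sq (norm_nonneg _), this]
  have hnvw' : ‖v - w‖ = Real.sqrt 2 := by
    have : ‖v - w‖ ^ 2 = 2 := by
      rw [norm_sub_sq_real, hv, hw, hvw]; norm_num
    rw [← Real.sqrt_sq (norm_nonneg _), this]
  have hv'u : ‖s • (v + w)‖ = 1 := by
    rw [norm_smul, hnvw, hs, Real.norm_eq_abs, abs_of_pos (by positivity)]
    field_simp
  have hw'u : ‖s • (v - w)‖ = 1 := by
    rw [norm_smul, hnvw', hs, Real.norm_eq_abs, abs_of_pos (by positivity)]
    field_simp
  have horth : ⟪s • (v + w), s • (v - w)⟫ = 0 := by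
    rw [real_inner_smul_left, real_inner_smul_right, inner_sub_right, inner_add_left,
      inner_add_left, real_inner_self_eq_norm_sq, real_inner_self_eq_norm_sq,
      hv, hw, real_inner_comm w v]
    ring
  have key : M22 = ∫ u, ⟪s • (v + w), u⟫ ^ 2 * ⟪s • (v - w), u⟫ ^ 2 ∂μ :=
    m22_eq hd hμ hv hw hvw hv'u hw'u horth
  have i1 : Integrable (fun u : E => (1/4 : ℝ) * ⟪v, u⟫ ^ 4) μ :=
    integrable_cont hμ (continuous_const.mul ((cont_inner v).pow 4))
  have i2 : Integrable (fun u : E => (1/4 : ℝ) * ⟪w, u⟫ ^ 4) μ :=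
    integrable_cont hμ (continuous_const.mul ((cont_inner w).pow 4))
  have i3 : Integrable (fun u : E => (1/2 : ℝ) * (⟪v, u⟫ ^ 2 * ⟪w, u⟫ ^ 2)) μ :=
    integrable_cont hμ (continuous_const.mul
      (((cont_inner v).pow 2).mul ((cont_inner w).pow 2)))
  have i12 : Integrable (fun u : E => (1/4 : ℝ) * ⟪v, u⟫ ^ 4 + (1/4 : ℝ) * ⟪w, u⟫ ^ 4) μ :=
    integrable_cont hμ ((continuous_const.mul ((cont_inner v).pow 4)).add
      (continuous_const.mul ((cont_inner w).pow 4)))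
  have expand : ∫ u, ⟪s • (v + w), u⟫ ^ 2 * ⟪s • (v - w), u⟫ ^ 2 ∂μ
      = (1/4) * M4 + (1/4) * (∫ u, ⟪w, u⟫ ^ 4 ∂μ) - (1/2) * M22 := by
    have hpt : ∀ u : E, ⟪s • (v + w), u⟫ ^ 2 * ⟪s • (v - w), u⟫ ^ 2
        = (1/4 : ℝ) * ⟪v, u⟫ ^ 4 + (1/4 : ℝ) * ⟪w, u⟫ ^ 4
          - (1/2 : ℝ) * (⟪v, u⟫ ^ 2 * ⟪w, u⟫ ^ 2) := by
      intro u
      rw [real_inner_smul_left, real_inner_smul_left, inner_add_left, inner_sub_left]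
      have hs4 : s ^ 4 = 1 / 4 := by
        have h4 : s ^ 4 = (s ^ 2) ^ 2 := by ring
        rw [h4, hs2]; norm_num
      set X := ⟪v, u⟫; set Y := ⟪w, u⟫
      linear_combination ((X + Y) * (X - Y)) ^ 2 * hs4
    rw [integral_congr_ae (Filter.Eventually.of_forall hpt), integral_sub i12 i3,
      integral_add i1 i2, integral_const_mul, integral_const_mul, integral_const_mul]
  have hw4 : ∫ u, ⟪w, u⟫ ^ 4 ∂μ = M4 := m4_eq (by omega) hμ hw hv
  have hM4eq : M4 = 3 * M22 := by
    have h1 : M22 = 1/4 * M4 + 1/4 * M4 - 1/2 * M22 :=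
      key.trans (expand.trans (by rw [hw4]))
    linarith
  -- M4 + (d-1) * M22 = d
  obtain ⟨b, hb0⟩ := exists_basis_single (by omega : 1 ≤ d) hv
  set i0 : Fin d := ⟨0, by omega⟩
  have hsum : ∑ j : Fin d, ∫ u, ⟪v, u⟫ ^ 2 * ⟪b j, u⟫ ^ 2 ∂μ = (d : ℝ) := by
    rw [← integral_finset_sum _ (fun j _ => integrable_cont (f := fun u => ⟪v, u⟫ ^ 2 * ⟪b j, u⟫ ^ 2) hμ
      (((cont_inner v).pow 2).mul ((cont_inner (b j)).pow 2)))]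
    have hae : ∀ᵐ u ∂μ, ∑ j : Fin d, ⟪v, u⟫ ^ 2 * ⟪b j, u⟫ ^ 2 = (d : ℝ) * ⟪v, u⟫ ^ 2 := by
      filter_upwards [ae_sphere hμ] with u hu
      rw [← Finset.mul_sum, parseval, hu, sq_sqrt (Nat.cast_nonneg d), mul_comm]
    rw [integral_congr_ae hae, integral_const_mul, moment2 (by omega) hμ hv, mul_one]
  have hterm : ∀ j : Fin d, j ≠ i0 → ∫ u, ⟪v, u⟫ ^ 2 * ⟪b j, u⟫ ^ 2 ∂μ = M22 := by
    intro j hj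
    refine m22_eq hd hμ hv (b.orthonormal.1 j) ?_ hv hw hvw
    rw [← hb0]
    exact b.orthonormal.2 (Ne.symm hj)
  have hterm0 : ∫ u, ⟪v, u⟫ ^ 2 * ⟪b i0, u⟫ ^ 2 ∂μ = M4 := by
    rw [hb0, hM4]
    congr 1; funext u; ring
  have hfe : ∀ j : Fin d, (∫ u, ⟪v, u⟫ ^ 2 * ⟪b j, u⟫ ^ 2 ∂μ)
      = M22 + (if j = i0 then M4 - M22 else 0) := by
    intro j
    by_cases hj : j = i0
    · subst hj; rw [hterm0]; simp
    · rw [hterm j hj]; simp [hj]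
  have hsplit : M4 + ((d : ℝ) - 1) * M22 = (d : ℝ) := by
    rw [Finset.sum_congr rfl (fun j _ => hfe j), Finset.sum_add_distrib,
      Finset.sum_const, Finset.sum_ite_eq' Finset.univ i0] at hsum
    simp only [Finset.mem_univ, if_true, Finset.card_univ, Fintype.card_fin,
      nsmul_eq_mul] at hsum
    linarith
  have hdr : (2 : ℝ) ≤ (d : ℝ) := by exact_mod_cast hd
  have hM22le : M22 ≤ 1 := by nlinarith [hsplit, hM4eq, hdr]
  exact ⟨by linarith, hM22le⟩

lemma moment4_bound (hd : 1 ≤ d) (hμ : IsUniformOnSphere d μ) (g : E) {v : E}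
    (hv : ‖v‖ = 1) :
    ∫ u, ⟪g, u⟫ ^ 2 * ⟪v, u⟫ ^ 2 ∂μ ≤ ‖g‖ ^ 2 + 2 * ⟪g, v⟫ ^ 2 := by
  haveI := hμ.1
  set α : ℝ := ⟪g, v⟫ with hα
  set p : E := g - α • v with hp
  have hvp : ⟪v, p⟫ = 0 := by
    rw [hp, inner_sub_right, real_inner_smul_right, real_inner_self_eq_norm_sq, hv,
      real_inner_comm]
    ring
  have hgdec : g = α • v + p := by rw [hp]; abel
  have hpyth : ‖g‖ ^ 2 = α ^ 2 + ‖p‖ ^ 2 := by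
    conv_lhs => rw [hgdec]
    rw [norm_add_sq_real, real_inner_smul_left, hvp, norm_smul, hv, Real.norm_eq_abs]
    rw [mul_pow, sq_abs]
    ring
  have hginner : ∀ u : E, ⟪g, u⟫ = α * ⟪v, u⟫ + ⟪p, u⟫ := by
    intro u
    conv_lhs => rw [hgdec]
    rw [inner_add_left, real_inner_smul_left]
  -- pointwise expansion
  have hpt : ∀ u : E, ⟪g, u⟫ ^ 2 * ⟪v, u⟫ ^ 2
      = α ^ 2 * ⟪v, u⟫ ^ 4 + (2 * α) * (⟪v, u⟫ ^ 3 * ⟪p, u⟫) + ⟪v, u⟫ ^ 2 * ⟪p, u⟫ ^ 2 := by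
    intro u; rw [hginner u]; ring
  have iA : Integrable (fun u : E => α ^ 2 * ⟪v, u⟫ ^ 4) μ :=
    integrable_cont hμ (continuous_const.mul ((cont_inner v).pow 4))
  have iB : Integrable (fun u : E => (2 * α) * (⟪v, u⟫ ^ 3 * ⟪p, u⟫)) μ :=
    integrable_cont hμ (continuous_const.mul (((cont_inner v).pow 3).mul (cont_inner p)))
  have iC : Integrable (fun u : E => ⟪v, u⟫ ^ 2 * ⟪p, u⟫ ^ 2) μ :=
    integrable_cont hμ (((cont_inner v).pow 2).mul ((cont_inner p).pow 2))
  have iAB : Integrable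
      (fun u : E => α ^ 2 * ⟪v, u⟫ ^ 4 + (2 * α) * (⟪v, u⟫ ^ 3 * ⟪p, u⟫)) μ :=
    integrable_cont hμ ((continuous_const.mul ((cont_inner v).pow 4)).add
      (continuous_const.mul (((cont_inner v).pow 3).mul (cont_inner p))))
  have hsplit : ∫ u, ⟪g, u⟫ ^ 2 * ⟪v, u⟫ ^ 2 ∂μ
      = α ^ 2 * (∫ u, ⟪v, u⟫ ^ 4 ∂μ) + (2 * α) * (∫ u, ⟪v, u⟫ ^ 3 * ⟪p, u⟫ ∂μ)
        + ∫ u, ⟪v, u⟫ ^ 2 * ⟪p, u⟫ ^ 2 ∂μ := by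
    rw [integral_congr_ae (Filter.Eventually.of_forall hpt), integral_add iAB iC,
      integral_add iA iB, integral_const_mul, integral_const_mul]
  have hB : ∫ u, ⟪v, u⟫ ^ 3 * ⟪p, u⟫ ∂μ = 0 := moment31 hμ hvp
  rcases Nat.lt_or_ge d 2 with hd2 | hd2
  · -- d = 1
    have hd1 : d = 1 := by omega
    subst hd1
    obtain ⟨b, hb0⟩ := exists_basis_single hd hv
    have hurep : ∀ u : EuclideanSpace ℝ (Fin 1), u = ⟪v, u⟫ • v := by
      intro u
      have hr := b.sum_repr' u
      rw [Fin.sum_univ_one] at hr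
      have h0 : b 0 = v := by
        rw [show (0 : Fin 1) = ⟨0, hd⟩ from rfl, hb0]
      rw [h0] at hr
      exact hr.symm
    have hae : ∀ᵐ u ∂μ, ⟪g, u⟫ ^ 2 * ⟪v, u⟫ ^ 2 = α ^ 2 := by
      filter_upwards [ae_sphere hμ] with u hu
      have hX2 : ⟪v, u⟫ ^ 2 = 1 := by
        have h1 : ‖u‖ = 1 := by rw [hu]; simp
        have h2 : ‖u‖ = |⟪v, u⟫| := by
          conv_lhs => rw [hurep u]
          rw [norm_smul, hv, Real.norm_eq_abs, mul_one]
        rw [← sq_abs, ← h2, h1, one_pow]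
      have hgu : ⟪g, u⟫ = α * ⟪v, u⟫ := by
        conv_lhs => rw [hurep u]
        rw [real_inner_smul_right, ← hα]
        ring
      rw [hgu]
      nlinarith [hX2]
    rw [integral_congr_ae hae, integral_const, probReal_univ]
    simp only [ENNReal.toReal_one, one_smul, smul_eq_mul]
    nlinarith [sq_nonneg α, sq_nonneg ‖g‖, hpyth, sq_nonneg ‖p‖]
  · -- d ≥ 2
    obtain ⟨b, hb0⟩ := exists_basis_single hd hv
    have hne : (⟨0, hd⟩ : Fin d) ≠ ⟨1, hd2⟩ := by simp [Fin.ext_iff]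
    have hw0n : ‖b ⟨1, hd2⟩‖ = 1 := b.orthonormal.1 _
    have hvw0 : ⟪v, b ⟨1, hd2⟩⟫ = 0 := by
      rw [← hb0]
      exact b.orthonormal.2 hne
    have hM4le : ∫ u, ⟪v, u⟫ ^ 4 ∂μ ≤ 3 :=
      (m4_m22_bounds hd2 hμ hv hw0n hvw0).1
    have hM4nn : 0 ≤ ∫ u, ⟪v, u⟫ ^ 4 ∂μ :=
      integral_nonneg fun u => by positivity
    by_cases hp0 : p = 0
    · have hC : ∫ u, ⟪v, u⟫ ^ 2 * ⟪p, u⟫ ^ 2 ∂μ = 0 := by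
        rw [hp0]
        simp
      have hpn : ‖p‖ = 0 := by rw [hp0]; simp
      rw [hsplit, hB, hC]
      have h1 : α ^ 2 * (∫ u, ⟪v, u⟫ ^ 4 ∂μ) ≤ α ^ 2 * 3 :=
        mul_le_mul_of_nonneg_left hM4le (sq_nonneg α)
      have h2 : ‖p‖ ^ 2 = 0 := by rw [hpn]; ring
      linarith
    · set w : E := ‖p‖⁻¹ • p with hwdef
      have hpn : ‖p‖ ≠ 0 := fun h => hp0 (norm_eq_zero.1 h)
      have hwn : ‖w‖ = 1 := norm_smul_inv_norm hp0
      have hvw : ⟪v, w⟫ = 0 := by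
        rw [hwdef, real_inner_smul_right, hvp, mul_zero]
      have hprep : p = ‖p‖ • w := by
        rw [hwdef, smul_smul, mul_inv_cancel₀ hpn, one_smul]
      have hC : ∫ u, ⟪v, u⟫ ^ 2 * ⟪p, u⟫ ^ 2 ∂μ
          = ‖p‖ ^ 2 * ∫ u, ⟪v, u⟫ ^ 2 * ⟪w, u⟫ ^ 2 ∂μ := by
        rw [← integral_const_mul]
        congr 1; funext u
        conv_lhs => rw [hprep]
        rw [real_inner_smul_left]
        ring
      have hM22le : ∫ u, ⟪v, u⟫ ^ 2 * ⟪w, u⟫ ^ 2 ∂μ ≤ 1 :=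
        (m4_m22_bounds hd2 hμ hv hwn hvw).2
      rw [hsplit, hB, hC]
      have h1 : α ^ 2 * (∫ u, ⟪v, u⟫ ^ 4 ∂μ) ≤ α ^ 2 * 3 :=
        mul_le_mul_of_nonneg_left hM4le (sq_nonneg α)
      have h2 : ‖p‖ ^ 2 * (∫ u, ⟪v, u⟫ ^ 2 * ⟪w, u⟫ ^ 2 ∂μ) ≤ ‖p‖ ^ 2 * 1 :=
        mul_le_mul_of_nonneg_left hM22le (sq_nonneg ‖p‖)
      linarith

lemma quadForm_smul (H : Matrix (Fin d) (Fin d) ℝ) (c : ℝ) (v : E) :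
    quadForm H (c • v) = c ^ 2 * quadForm H v := by
  unfold quadForm
  rw [Finset.mul_sum]
  refine Finset.sum_congr rfl fun i _ => ?_
  rw [Finset.mul_sum]
  refine Finset.sum_congr rfl fun j _ => ?_
  simp only [PiLp.smul_apply, smul_eq_mul]
  ring

lemma euclideanCLM_apply (H : Matrix (Fin d) (Fin d) ℝ) (x : E) (i : Fin d) :
    (Matrix.toEuclideanCLM (𝕜 := ℝ) (n := Fin d) H x) i = ∑ j, H i j * x j := by
  have h := Matrix.ofLp_toEuclideanCLM (𝕜 := ℝ) (n := Fin d) H x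
  have h2 : (WithLp.ofLp ((Matrix.toEuclideanCLM (𝕜 := ℝ) H) x)) i
      = (Matrix.toEuclideanCLM (𝕜 := ℝ) H x) i := rfl
  rw [← h2, h]
  simp [Matrix.mulVec, dotProduct]

lemma quadForm_eq_inner (H : Matrix (Fin d) (Fin d) ℝ) (v : E) :
    quadForm H v = ⟪v, Matrix.toEuclideanCLM (𝕜 := ℝ) (n := Fin d) H v⟫ := by
  rw [PiLp.inner_apply]
  unfold quadForm
  refine Finset.sum_congr rfl fun i _ => ?_
  rw [euclideanCLM_apply]
  simp only [Real.inner_apply, conj_trivial, Finset.mul_sum]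
  refine Finset.sum_congr rfl fun j _ => ?_
  ring

lemma clm_eigen (H : Matrix (Fin d) (Fin d) ℝ) (hherm : H.IsHermitian) (i : Fin d) :
    Matrix.toEuclideanCLM (𝕜 := ℝ) (n := Fin d) H (hherm.eigenvectorBasis i)
      = hherm.eigenvalues i • hherm.eigenvectorBasis i := by
  have hmv := hherm.mulVec_eigenvectorBasis i
  apply WithLp.ofLp_injective 2
  rw [Matrix.ofLp_toEuclideanCLM]
  simpa using hmv

lemma quadForm_spectral (H : Matrix (Fin d) (Fin d) ℝ) (hherm : H.IsHermitian) (v : E) :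
    quadForm H v = ∑ i, hherm.eigenvalues i * ⟪hherm.eigenvectorBasis i, v⟫ ^ 2 := by
  set T := Matrix.toEuclideanCLM (𝕜 := ℝ) (n := Fin d) H
  set V := hherm.eigenvectorBasis
  rw [quadForm_eq_inner]
  have hv' : ∑ i, ⟪V i, v⟫ • V i = v := V.sum_repr' v
  calc ⟪v, T v⟫ = ⟪v, T (∑ i, ⟪V i, v⟫ • V i)⟫ := by rw [hv']
    _ = ⟪v, ∑ i, ⟪V i, v⟫ • T (V i)⟫ := by
        congr 1
        rw [map_sum]
        refine Finset.sum_congr rfl fun i _ => ?_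
        rw [_root_.map_smul]
    _ = ∑ i, ⟪V i, v⟫ * ⟪v, T (V i)⟫ := by
        rw [inner_sum]
        refine Finset.sum_congr rfl fun i _ => ?_
        rw [real_inner_smul_right]
    _ = ∑ i, hherm.eigenvalues i * ⟪V i, v⟫ ^ 2 := by
        refine Finset.sum_congr rfl fun i _ => ?_
        rw [clm_eigen H hherm i, real_inner_smul_right, real_inner_comm v (V i)]
        ring

lemma eigen_sum_trace (H : Matrix (Fin d) (Fin d) ℝ) (hherm : H.IsHermitian) :
    ∑ i, hherm.eigenvalues i = H.trace := by
  have hspec := hherm.spectral_theorem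
  have h1 : H.trace = Matrix.trace ((hherm.eigenvectorUnitary : Matrix (Fin d) (Fin d) ℝ)
      * Matrix.diagonal (RCLike.ofReal ∘ hherm.eigenvalues)
      * (star (hherm.eigenvectorUnitary : Matrix (Fin d) (Fin d) ℝ))) := by
    conv_lhs => rw [hspec]
    rfl
  rw [Matrix.trace_mul_cycle] at h1
  rw [Matrix.UnitaryGroup.star_mul_self, Matrix.one_mul, Matrix.trace_diagonal] at h1
  rw [h1]
  simp

lemma quadForm_le (H : Matrix (Fin d) (Fin d) ℝ) {ell : ℝ}
    (hHnorm : ‖(Matrix.toEuclideanCLM (𝕜 := ℝ) (n := Fin d)) H‖ ≤ ell) (g : E) :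
    quadForm H g ≤ ell * ‖g‖ ^ 2 := by
  rw [quadForm_eq_inner]
  calc ⟪g, Matrix.toEuclideanCLM (𝕜 := ℝ) (n := Fin d) H g⟫
      ≤ ‖g‖ * ‖Matrix.toEuclideanCLM (𝕜 := ℝ) (n := Fin d) H g‖ := real_inner_le_norm _ _
    _ ≤ ‖g‖ * (‖(Matrix.toEuclideanCLM (𝕜 := ℝ) (n := Fin d)) H‖ * ‖g‖) := by
        refine mul_le_mul_of_nonneg_left (ContinuousLinearMap.le_opNorm _ _) (norm_nonneg _)
    _ ≤ ell * ‖g‖ ^ 2 := by nlinarith [norm_nonneg g, (norm_nonneg ((Matrix.toEuclideanCLM (𝕜 := ℝ) (n := Fin d)) H)).trans hHnorm]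


end ZO

open ZO in
theorem zo_gradient_H_quadratic_form_bound
    (d : ℕ) (hd : 1 ≤ d) (μ : Measure (EuclideanSpace ℝ (Fin d)))
    (hμ : IsUniformOnSphere d μ)
    (ell r lam : ℝ) (hr : 0 < r) (hlam : 0 < lam)
    (F : EuclideanSpace ℝ (Fin d) → ℝ)
    (hF : Differentiable ℝ F)
    (hsmooth : ∀ x y : EuclideanSpace ℝ (Fin d),
      ‖gradient F x - gradient F y‖ ≤ ell * ‖x - y‖)
    (H : Matrix (Fin d) (Fin d) ℝ) (hHsym : H.IsSymm) (hHpsd : H.PosSemidef)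
    (hHnorm : ‖(Matrix.toEuclideanCLM (𝕜 := ℝ) (n := Fin d)) H‖ ≤ ell)
    (hHtr : H.trace ≤ r * ell)
    (x : EuclideanSpace ℝ (Fin d)) :
    (∫ u, quadForm H (((F (x + lam • u) - F (x - lam • u)) / (2 * lam)) • u) ∂μ) ≤
      2 * ell * (r + 2) * ‖gradient F x‖ ^ 2 + (ell ^ 3 / 2) * lam ^ 2 * d ^ 2 * r := by
  haveI := hμ.1
  set g : EuclideanSpace ℝ (Fin d) := gradient F x with hg
  -- ell is nonnegative
  have hell : 0 ≤ ell := by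
    set u₀ : EuclideanSpace ℝ (Fin d) := EuclideanSpace.single ⟨0, hd⟩ (1:ℝ) with hu₀
    have h1 := (norm_nonneg (gradient F 0 - gradient F u₀)).trans (hsmooth 0 u₀)
    rw [zero_sub, norm_neg, hu₀, EuclideanSpace.norm_single] at h1
    simpa using h1
  have hherm : H.IsHermitian := hHpsd.1
  set V := hherm.eigenvectorBasis with hV
  set ev := hherm.eigenvalues with hev
  have hVn : ∀ i, ‖V i‖ = 1 := fun i => V.orthonormal.1 i
  have hevnn : ∀ i, 0 ≤ ev i := fun i => hHpsd.eigenvalues_nonneg i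
  set c : EuclideanSpace ℝ (Fin d) → ℝ :=
    fun u => (F (x + lam • u) - F (x - lam • u)) / (2 * lam) with hc
  have hFc : Continuous F := hF.continuous
  have hccont : Continuous c := by
    apply Continuous.div_const
    exact (hFc.comp (continuous_const.add (continuous_id.const_smul lam))).sub
      (hFc.comp (continuous_const.sub (continuous_id.const_smul lam)))
  have hQrw : ∀ u : EuclideanSpace ℝ (Fin d),
      quadForm H u = ∑ i, ev i * ⟪V i, u⟫ ^ 2 := fun u => quadForm_spectral H hherm u
  have hQcont : Continuous fun u : EuclideanSpace ℝ (Fin d) => quadForm H u := by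
    have heq : (fun u : EuclideanSpace ℝ (Fin d) => quadForm H u)
        = fun u => ∑ i, ev i * ⟪V i, u⟫ ^ 2 := funext hQrw
    rw [heq]
    exact continuous_finset_sum _ fun i _ =>
      continuous_const.mul ((cont_inner (V i)).pow 2)
  have hQnn : ∀ u : EuclideanSpace ℝ (Fin d), 0 ≤ quadForm H u := by
    intro u
    rw [hQrw]
    exact Finset.sum_nonneg fun i _ => mul_nonneg (hevnn i) (sq_nonneg _)
  set Cst : ℝ := ell ^ 2 * lam ^ 2 / 2 * (d : ℝ) ^ 2 with hCst
  have hCstnn : 0 ≤ Cst := by positivity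
  -- pointwise a.e. bound
  have hae : ∀ᵐ u ∂μ, quadForm H (c u • u)
      ≤ (2 * ⟪g, u⟫ ^ 2 + Cst) * quadForm H u := by
    filter_upwards [ae_sphere hμ] with u hu
    rw [quadForm_smul]
    have hu2 : ‖u‖ ^ 2 = (d : ℝ) := by rw [hu, sq_sqrt (Nat.cast_nonneg d)]
    -- Taylor bounds
    have hT1 := taylor_bound hF hell hsmooth x (x + lam • u)
    have hT2 := taylor_bound hF hell hsmooth x (x - lam • u)
    rw [add_sub_cancel_left, real_inner_smul_right, norm_smul, Real.norm_eq_abs,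
      abs_of_pos hlam, mul_pow, hu2] at hT1
    have hsub : x - lam • u - x = -(lam • u) := by abel
    rw [hsub, norm_neg, inner_neg_right, real_inner_smul_right, norm_smul,
      Real.norm_eq_abs, abs_of_pos hlam, mul_pow, hu2] at hT2
    -- |c u - ⟪g,u⟫| ≤ ell*lam*d/2
    set s : ℝ := ⟪g, u⟫
    have hlam2 : (0:ℝ) < 2 * lam := by linarith
    have hcgs : |c u - s| ≤ ell * lam * (d : ℝ) / 2 := by
      have hrw : c u - s = ((F (x + lam • u) - F x - lam * s)
          - (F (x - lam • u) - F x - -(lam * s))) / (2 * lam) := by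
        rw [hc]
        field_simp
        ring
      rw [hrw, abs_div, abs_of_pos hlam2, div_le_iff₀ hlam2]
      calc |F (x + lam • u) - F x - lam * s - (F (x - lam • u) - F x - -(lam * s))|
          ≤ |F (x + lam • u) - F x - lam * s| + |F (x - lam • u) - F x - -(lam * s)| :=
            abs_sub _ _
        _ ≤ ell / 2 * (lam ^ 2 * (d:ℝ)) + ell / 2 * (lam ^ 2 * (d:ℝ)) := by
            gcongr
        _ = ell * lam * (d:ℝ) / 2 * (2 * lam) := by ring
    have hc2 : (c u) ^ 2 ≤ 2 * s ^ 2 + Cst := by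
      have h1 : (c u - s) ^ 2 ≤ (ell * lam * (d:ℝ) / 2) ^ 2 := by
        have := abs_le.1 hcgs
        nlinarith [this.1, this.2]
      rw [hCst]
      nlinarith [sq_nonneg (c u - 2 * s), h1]
    exact mul_le_mul_of_nonneg_right hc2 (hQnn u)
  -- integrability
  have int1 : Integrable (fun u => quadForm H (c u • u)) μ := by
    have heq : (fun u : EuclideanSpace ℝ (Fin d) => quadForm H (c u • u))
        = fun u => (c u) ^ 2 * quadForm H u := funext fun u => quadForm_smul H (c u) u
    rw [heq]
    exact integrable_cont hμ ((hccont.pow 2).mul hQcont)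
  have i_gQ : Integrable (fun u => ⟪g, u⟫ ^ 2 * quadForm H u) μ :=
    integrable_cont hμ (((cont_inner g).pow 2).mul hQcont)
  have i_A : Integrable (fun u => 2 * (⟪g, u⟫ ^ 2 * quadForm H u)) μ :=
    integrable_cont hμ (continuous_const.mul (((cont_inner g).pow 2).mul hQcont))
  have i_B : Integrable (fun u => Cst * quadForm H u) μ :=
    integrable_cont hμ (continuous_const.mul hQcont)
  have int2 : Integrable (fun u => (2 * ⟪g, u⟫ ^ 2 + Cst) * quadForm H u) μ :=
    integrable_cont hμ (((continuous_const.mul ((cont_inner g).pow 2)).add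
      continuous_const).mul hQcont)
  -- main comparison
  have hstep1 : (∫ u, quadForm H (c u • u) ∂μ)
      ≤ ∫ u, (2 * ⟪g, u⟫ ^ 2 + Cst) * quadForm H u ∂μ :=
    integral_mono_ae int1 int2 hae
  -- split the right integral
  have hsplit : ∫ u, (2 * ⟪g, u⟫ ^ 2 + Cst) * quadForm H u ∂μ
      = 2 * (∫ u, ⟪g, u⟫ ^ 2 * quadForm H u ∂μ) + Cst * ∫ u, quadForm H u ∂μ := by
    have hpt : ∀ u : EuclideanSpace ℝ (Fin d),
        (2 * ⟪g, u⟫ ^ 2 + Cst) * quadForm H u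
        = 2 * (⟪g, u⟫ ^ 2 * quadForm H u) + Cst * quadForm H u := fun u => by ring
    rw [integral_congr_ae (Filter.Eventually.of_forall hpt), integral_add i_A i_B,
      integral_const_mul, integral_const_mul]
  -- ∫ Q = trace
  have hQint : ∫ u, quadForm H u ∂μ = H.trace := by
    rw [integral_congr_ae (Filter.Eventually.of_forall hQrw),
      integral_finset_sum _ (fun i _ => integrable_cont (f := fun u => ev i * ⟪V i, u⟫ ^ 2) hμ
        (continuous_const.mul ((cont_inner (V i)).pow 2)))]
    rw [← eigen_sum_trace H hherm]
    refine Finset.sum_congr rfl fun i _ => ?_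
    rw [integral_const_mul, moment2 hd hμ (hVn i), mul_one]
  -- bound on ∫ ⟪g,u⟫² Q
  have hgQ : ∫ u, ⟪g, u⟫ ^ 2 * quadForm H u ∂μ ≤ ell * (r + 2) * ‖g‖ ^ 2 := by
    have hpt : ∀ u : EuclideanSpace ℝ (Fin d),
        ⟪g, u⟫ ^ 2 * quadForm H u = ∑ i, ev i * (⟪g, u⟫ ^ 2 * ⟪V i, u⟫ ^ 2) := by
      intro u
      rw [hQrw, Finset.mul_sum]
      exact Finset.sum_congr rfl fun i _ => by ring
    rw [integral_congr_ae (Filter.Eventually.of_forall hpt),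
      integral_finset_sum _ (fun i _ => integrable_cont
        (f := fun u => ev i * (⟪g, u⟫ ^ 2 * ⟪V i, u⟫ ^ 2)) hμ
        (continuous_const.mul (((cont_inner g).pow 2).mul ((cont_inner (V i)).pow 2))))]
    have hterm : ∀ i, ∫ u, ev i * (⟪g, u⟫ ^ 2 * ⟪V i, u⟫ ^ 2) ∂μ
        ≤ ev i * (‖g‖ ^ 2 + 2 * ⟪g, V i⟫ ^ 2) := by
      intro i
      rw [integral_const_mul]
      exact mul_le_mul_of_nonneg_left (moment4_bound hd hμ g (hVn i)) (hevnn i)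
    calc ∑ i, ∫ u, ev i * (⟪g, u⟫ ^ 2 * ⟪V i, u⟫ ^ 2) ∂μ
        ≤ ∑ i, ev i * (‖g‖ ^ 2 + 2 * ⟪g, V i⟫ ^ 2) :=
          Finset.sum_le_sum fun i _ => hterm i
      _ = (∑ i, ev i) * ‖g‖ ^ 2 + 2 * ∑ i, ev i * ⟪V i, g⟫ ^ 2 := by
          rw [Finset.sum_mul, Finset.mul_sum, ← Finset.sum_add_distrib]
          refine Finset.sum_congr rfl fun i _ => ?_
          rw [real_inner_comm (V i) g]
          ring
      _ = H.trace * ‖g‖ ^ 2 + 2 * quadForm H g := by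
          rw [eigen_sum_trace H hherm, ← quadForm_spectral H hherm g]
      _ ≤ (r * ell) * ‖g‖ ^ 2 + 2 * (ell * ‖g‖ ^ 2) :=
          add_le_add (mul_le_mul_of_nonneg_right hHtr (sq_nonneg _))
            (mul_le_mul_of_nonneg_left (quadForm_le H hHnorm g) (by norm_num))
      _ = ell * (r + 2) * ‖g‖ ^ 2 := by ring
  -- finish
  have htr_nn : Cst * H.trace ≤ Cst * (r * ell) :=
    mul_le_mul_of_nonneg_left hHtr hCstnn
  have hfinal : Cst * (r * ell) = ell ^ 3 / 2 * lam ^ 2 * (d:ℝ) ^ 2 * r := by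
    rw [hCst]; ring
  calc (∫ u, quadForm H (c u • u) ∂μ)
      ≤ 2 * (∫ u, ⟪g, u⟫ ^ 2 * quadForm H u ∂μ) + Cst * ∫ u, quadForm H u ∂μ := by
        rw [← hsplit]; exact hstep1
    _ ≤ 2 * (ell * (r + 2) * ‖g‖ ^ 2) + Cst * (r * ell) := by
        rw [hQint]
        have := mul_le_mul_of_nonneg_left hgQ (by norm_num : (0:ℝ) ≤ 2)
        linarith
    _ = 2 * ell * (r + 2) * ‖g‖ ^ 2 + ell ^ 3 / 2 * lam ^ 2 * (d:ℝ) ^ 2 * r := by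
        rw [hfinal]; ring
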